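/- Let (Δ, v) be a rooted directed graph and let cut(Δ, v) be the graph obtained by detaching every edge ending at v so that it ends instead at a new distinct vertex. Then cut(Δ, v) is rooted at v, and (cut(Δ, v), v) has the unique simple path property if and only if (Δ, v) does. -/

import Mathlib

structure DGraph : Type 1 where
  V : Type
  E : Type
  ι : E → V
  τ : E → V

namespace DGraph

/-- A directed path from `u` to `w` given by its list of edges. -/
inductive Path (G : DGraph) : G.V → G.V → List G.E → Prop
  | nil (v : G.V) : Path G v v []
  | cons (e : G.E) {w : G.V} {p : List G.E} :
      Path G (G.τ e) w p → Path G (G.ι e) w (e :: p)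

/-- The list of vertices visited by a path `p` starting at `u`. -/
def verts (G : DGraph) (u : G.V) (p : List G.E) : List G.V :=
  u :: p.map G.τ

/-- A simple directed path: a path visiting no vertex twice. -/
def SimplePath (G : DGraph) (u w : G.V) (p : List G.E) : Prop :=
  G.Path u w p ∧ (G.verts u p).Nodup

/-- `w` is reachable from `u` by a directed path. -/
def Reach (G : DGraph) (u w : G.V) : Prop := ∃ p, G.Path u w p

/-- A graph is rooted at `v` if every vertex is reachable from `v`. -/
def Rooted (G : DGraph) (v : G.V) : Prop := ∀ w, G.Reach v w

end DGraph


namespace DGraph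

open scoped Classical in
/-- The cut of a rooted graph at `v`: every edge ending at `v` is detached so
that it ends instead at its own new vertex. -/
noncomputable def Cut (G : DGraph) (v : G.V) : DGraph where
  V := G.V ⊕ {e : G.E // G.τ e = v}
  E := G.E
  ι := fun e => Sum.inl (G.ι e)
  τ := fun e =>
    if h : G.τ e = v then Sum.inr ⟨e, h⟩ else Sum.inl (G.τ e)

section Aux

variable {G : DGraph} {v : G.V}

lemma Path.append {u w x : G.V} {p q : List G.E} (hp : G.Path u w p)
    (hq : G.Path w x q) : G.Path u x (p ++ q) := by
  induction hp with
  | nil => exact hq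
  | cons e _ ih => exact Path.cons e (ih hq)

lemma cut_tau_eq_inl {e : G.E} (h : G.τ e ≠ v) :
    (G.Cut v).τ e = Sum.inl (G.τ e) := by
  simp [Cut, h]

lemma cut_tau_eq_inr {e : G.E} (h : G.τ e = v) :
    (G.Cut v).τ e = Sum.inr ⟨e, h⟩ := by
  simp [Cut, h]

lemma cut_path_inr {s : {e : G.E // G.τ e = v}} {x : (G.Cut v).V} {p : List (G.Cut v).E}
    (hp : (G.Cut v).Path (Sum.inr s) x p) : p = [] ∧ x = Sum.inr s := by
  match hp with
  | .nil _ => exact ⟨rfl, rfl⟩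

lemma path_lift {u w : G.V} {p : List G.E} (hp : G.Path u w p)
    (hav : ∀ e ∈ p, G.τ e ≠ v) :
    (G.Cut v).Path (Sum.inl u) (Sum.inl w) p := by
  induction hp with
  | nil => exact Path.nil _
  | cons e hp ih =>
      have h1 : G.τ e ≠ v := hav e (List.mem_cons_self)
      have h2 := ih (fun e' he' => hav e' (List.mem_cons_of_mem _ he'))
      exact Path.cons (G := G.Cut v) e ((cut_tau_eq_inl h1).symm ▸ h2)

lemma path_proj_inl : ∀ {p : List (G.Cut v).E} {u w : G.V},
    (G.Cut v).Path (Sum.inl u) (Sum.inl w) p →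
    G.Path u w p ∧ ∀ e ∈ p, G.τ e ≠ v := by
  intro p
  induction p with
  | nil =>
      intro u w hp
      match hp with
      | .nil _ =>
      exact ⟨Path.nil _, by simp⟩
  | cons e p ih =>
      intro u w hp
      match hp with
      | .cons _ hp' =>
        by_cases h : G.τ e = v
        · rw [cut_tau_eq_inr h] at hp'
          obtain ⟨-, heq⟩ := cut_path_inr hp'
          exact absurd heq (by simp)
        · rw [cut_tau_eq_inl h] at hp'
          obtain ⟨h1, h2⟩ := ih hp'
          refine ⟨Path.cons (G := G) e h1, ?_⟩
          intro e' he'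
          rcases List.mem_cons.mp he' with rfl | he'
          · exact h
          · exact h2 _ he'

lemma path_proj_inr {s : {e : G.E // G.τ e = v}} : ∀ {p : List (G.Cut v).E} {u : G.V},
    (G.Cut v).Path (Sum.inl u) (Sum.inr s) p →
    ∃ q : List G.E, p = q ++ [s.1] ∧ G.Path u (G.ι s.1) q ∧ ∀ e ∈ q, G.τ e ≠ v := by
  intro p
  induction p with
  | nil => intro u hp; nomatch hp
  | cons e p ih =>
      intro u hp
      match hp with
      | .cons _ hp' =>
        by_cases h : G.τ e = v
        · rw [cut_tau_eq_inr h] at hp'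
          obtain ⟨rfl, heq⟩ := cut_path_inr hp'
          have hs : s = ⟨e, h⟩ := by
            cases heq; rfl
          subst hs
          exact ⟨[], rfl, Path.nil _, by simp⟩
        · rw [cut_tau_eq_inl h] at hp'
          obtain ⟨q, rfl, hq, hav⟩ := ih hp'
          refine ⟨e :: q, rfl, Path.cons (G := G) e hq, ?_⟩
          intro e' he'
          rcases List.mem_cons.mp he' with rfl | he'
          · exact h
          · exact hav _ he'

lemma verts_lift {u : G.V} {p : List G.E} (hav : ∀ e ∈ p, G.τ e ≠ v) :
    (G.Cut v).verts (Sum.inl u) p = (G.verts u p).map Sum.inl := by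
  simp only [verts, List.map_cons, List.map_map]
  congr 1
  exact List.map_congr_left fun e he => cut_tau_eq_inl (hav e he)

lemma verts_concat {u : G.V} {q : List G.E} {s : {e : G.E // G.τ e = v}}
    (hav : ∀ e ∈ q, G.τ e ≠ v) :
    (G.Cut v).verts (Sum.inl u) (q ++ [s.1])
      = (G.verts u q).map Sum.inl ++ [Sum.inr s] := by
  have h2 : q.map (G.Cut v).τ = q.map (fun e => Sum.inl (G.τ e)) :=
    List.map_congr_left fun e he => cut_tau_eq_inl (hav e he)
  have h3 : (q ++ [s.1]).map (G.Cut v).τ = (q.map G.τ).map Sum.inl ++ [Sum.inr s] := by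
    refine List.map_append.trans ?_
    exact congrArg₂ (· ++ ·) (h2.trans List.map_map.symm)
      (congrArg (fun x => [x]) (cut_tau_eq_inr s.2))
  exact congrArg (List.cons (Sum.inl u)) h3

lemma avoid_of_nodup {p : List G.E} (hnd : (G.verts v p).Nodup) :
    ∀ e ∈ p, G.τ e ≠ v := by
  intro e he heq
  have hv : v ∈ p.map G.τ := heq ▸ List.mem_map_of_mem he
  exact (List.nodup_cons.mp hnd).1 hv

lemma simple_iff_inl {w : G.V} {p : List G.E} :
    (G.Cut v).SimplePath (Sum.inl v) (Sum.inl w) p ↔ G.SimplePath v w p := by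
  constructor
  · rintro ⟨hp, hnd⟩
    obtain ⟨hp', hav⟩ := path_proj_inl hp
    rw [verts_lift hav] at hnd
    exact ⟨hp', hnd.of_map _⟩
  · rintro ⟨hp, hnd⟩
    have hav := avoid_of_nodup hnd
    exact ⟨path_lift hp hav,
      by rw [verts_lift hav]; exact hnd.map Sum.inl_injective⟩

lemma cut_edge_path (s : {e : G.E // G.τ e = v}) :
    (G.Cut v).Path (Sum.inl (G.ι s.1)) (Sum.inr s) [s.1] := by
  have h := Path.cons (G := G.Cut v) s.1 (Path.nil ((G.Cut v).τ s.1))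
  rwa [cut_tau_eq_inr s.2] at h

lemma simple_iff_inr {s : {e : G.E // G.τ e = v}} {p : List G.E} :
    (G.Cut v).SimplePath (Sum.inl v) (Sum.inr s) p ↔
      ∃ q, p = q ++ [s.1] ∧ G.SimplePath v (G.ι s.1) q := by
  constructor
  · rintro ⟨hp, hnd⟩
    obtain ⟨q, rfl, hq, hav⟩ := path_proj_inr hp
    rw [verts_concat hav] at hnd
    replace hnd := List.nodup_append.mp hnd
    exact ⟨q, rfl, hq, hnd.1.of_map _⟩
  · rintro ⟨q, rfl, hq, hnd⟩
    have hav := avoid_of_nodup hnd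
    refine ⟨(path_lift hq hav).append (cut_edge_path s), ?_⟩
    rw [verts_concat hav]
    refine List.nodup_append.mpr ⟨hnd.map Sum.inl_injective, List.nodup_singleton _, ?_⟩
    intro x hx x' hx' hxx'
    replace hx' := List.mem_singleton.mp hx'
    subst hx' hxx'
    obtain ⟨y, -, hy⟩ := List.mem_map.mp hx
    exact Sum.inl_ne_inr hy

lemma shrink : ∀ {p : List G.E} {a u : G.V}, G.Path a u p → u ≠ v →
    (∀ e ∈ p, G.τ e ≠ v) ∨ ∃ q, q.length < p.length ∧ G.Path v u q := by
  intro p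
  induction p with
  | nil => intro a u hp hu; left; simp
  | cons e p ih =>
      intro a u hp hu
      cases hp with
      | cons _ hp' =>
        by_cases h : G.τ e = v
        · right; exact ⟨p, by simp, h ▸ hp'⟩
        · rcases ih hp' hu with hav | ⟨q, hlen, hq⟩
          · left
            intro e' he'
            rcases List.mem_cons.mp he' with rfl | he'
            · exact h
            · exact hav _ he'
          · right; exact ⟨q, by simp; omega, hq⟩

lemma exists_avoiding : ∀ (n : ℕ) {p : List G.E}, p.length ≤ n → ∀ {u : G.V},
    u ≠ v → G.Path v u p → ∃ q, G.Path v u q ∧ ∀ e ∈ q, G.τ e ≠ v := by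
  intro n
  induction n with
  | zero =>
      intro p hlen u hu hp
      rcases shrink hp hu with hav | ⟨q, hlt, -⟩
      · exact ⟨p, hp, hav⟩
      · omega
  | succ n ih =>
      intro p hlen u hu hp
      rcases shrink hp hu with hav | ⟨q, hlt, hq⟩
      · exact ⟨p, hp, hav⟩
      · exact ih (by omega) hu hq

end Aux

/-- The cut graph `cut(Δ, v)` is rooted at `v`, and it has the unique simple
path property at `v` if and only if `(Δ, v)` does. -/
theorem cut_rooted_and_uspp_iff (G : DGraph) (v : G.V) (hroot : G.Rooted v) :
    (G.Cut v).Rooted (Sum.inl v) ∧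
      ((∀ w : (G.Cut v).V, ∃! p : List (G.Cut v).E,
          (G.Cut v).SimplePath (Sum.inl v) w p) ↔
        (∀ w : G.V, ∃! p : List G.E, G.SimplePath v w p)) := by
  constructor
  · rintro (u | s)
    · by_cases hu : u = v
      · subst hu; exact ⟨[], Path.nil _⟩
      · obtain ⟨p, hp⟩ := hroot u
        obtain ⟨q, hq, hav⟩ := exists_avoiding p.length le_rfl hu hp
        exact ⟨q, path_lift hq hav⟩
    · by_cases hu : G.ι s.1 = v
      · refine ⟨[s.1], ?_⟩
        have h := cut_edge_path s
        rwa [hu] at h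
      · obtain ⟨p, hp⟩ := hroot (G.ι s.1)
        obtain ⟨q, hq, hav⟩ := exists_avoiding p.length le_rfl hu hp
        exact ⟨q ++ [s.1], (path_lift hq hav).append (cut_edge_path s)⟩
  · constructor
    · intro H w
      obtain ⟨p, hp, hu⟩ := H (Sum.inl w)
      exact ⟨p, simple_iff_inl.mp hp, fun q hq => hu q (simple_iff_inl.mpr hq)⟩
    · rintro H (w | s)
      · obtain ⟨p, hp, hu⟩ := H w
        exact ⟨p, simple_iff_inl.mpr hp, fun q hq => hu q (simple_iff_inl.mp hq)⟩
      · obtain ⟨q, hq, hu⟩ := H (G.ι s.1)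
        refine ⟨q ++ [s.1], simple_iff_inr.mpr ⟨q, rfl, hq⟩, ?_⟩
        intro p hp
        obtain ⟨q', rfl, hq'⟩ := simple_iff_inr.mp hp
        rw [hu q' hq']

end DGraph
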